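/- Let a 2-CS-PIP instance with profits c_e ≥ 0 be given and let x be a fractional solution whose support { e ∈ E : x_e > 0 } is acyclic (forms a forest). Then there exists an integral solution M with Σ_{e ∈ M} c_e ≥ (1/2) Σ_{e ∈ E} c_e x_e. -/

import Mathlib

open Finset


section Knapsack

variable {ι : Type*} [DecidableEq ι]

/-- One uncrossing step: given two fractional coordinates, shift mass to make one
of them integral without decreasing profit or violating the capacity. -/
private lemma uncross_step (S : Finset ι) (dd : ι → ℤ) (cc : ι → ℝ) (xx : ι → ℝ)
    (hd1 : ∀ f ∈ S, 1 ≤ dd f)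
    (hx0 : ∀ f ∈ S, 0 ≤ xx f) (hx1 : ∀ f ∈ S, xx f ≤ 1)
    {f g : ι} (hf : f ∈ S) (hg : g ∈ S) (hfg : f ≠ g)
    (hffrac : 0 < xx f ∧ xx f < 1) (hgfrac : 0 < xx g ∧ xx g < 1)
    (horder : cc g * (dd f : ℝ) ≤ cc f * (dd g : ℝ)) :
    ∃ xx' : ι → ℝ, (∀ a ∈ S, 0 ≤ xx' a) ∧ (∀ a ∈ S, xx' a ≤ 1) ∧
      (∑ a ∈ S, (dd a : ℝ) * xx' a) = (∑ a ∈ S, (dd a : ℝ) * xx a) ∧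
      (∑ a ∈ S, cc a * xx a) ≤ (∑ a ∈ S, cc a * xx' a) ∧
      (S.filter (fun a => 0 < xx' a ∧ xx' a < 1)).card
        < (S.filter (fun a => 0 < xx a ∧ xx a < 1)).card := by
  classical
  have hdf : (0:ℝ) < (dd f : ℝ) := by exact_mod_cast lt_of_lt_of_le one_pos (by exact_mod_cast hd1 f hf)
  have hdg : (0:ℝ) < (dd g : ℝ) := by exact_mod_cast lt_of_lt_of_le one_pos (by exact_mod_cast hd1 g hg)
  -- the step size
  set ε : ℝ := min ((1 - xx f) / (dd g : ℝ)) (xx g / (dd f : ℝ)) with hε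
  have hε0 : 0 < ε := by
    apply lt_min
    · exact div_pos (by linarith [hffrac.2]) hdg
    · exact div_pos hgfrac.1 hdf
  have hε1 : ε * (dd g : ℝ) ≤ 1 - xx f := by
    have : ε ≤ (1 - xx f) / (dd g : ℝ) := min_le_left _ _
    calc ε * (dd g:ℝ) ≤ ((1 - xx f)/(dd g:ℝ)) * (dd g:ℝ) := by
          exact mul_le_mul_of_nonneg_right this (le_of_lt hdg)
      _ = 1 - xx f := by field_simp
  have hε2 : ε * (dd f : ℝ) ≤ xx g := by
    have : ε ≤ xx g / (dd f : ℝ) := min_le_right _ _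
    calc ε * (dd f:ℝ) ≤ (xx g/(dd f:ℝ)) * (dd f:ℝ) := by
          exact mul_le_mul_of_nonneg_right this (le_of_lt hdf)
      _ = xx g := by field_simp
  set xx' : ι → ℝ := fun a => if a = f then xx f + ε * (dd g:ℝ)
      else if a = g then xx g - ε * (dd f:ℝ) else xx a with hxx'
  have hxf' : xx' f = xx f + ε * (dd g:ℝ) := by simp [hxx']
  have hxg' : xx' g = xx g - ε * (dd f:ℝ) := by simp [hxx', hfg.symm, if_neg hfg.symm]
  have hother : ∀ a, a ≠ f → a ≠ g → xx' a = xx a := by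
    intro a h1 h2; simp [hxx', h1, h2]
  -- basic bounds
  have hb0 : ∀ a ∈ S, 0 ≤ xx' a := by
    intro a ha
    by_cases h1 : a = f
    · subst h1; rw [hxf']; nlinarith [hffrac.1]
    by_cases h2 : a = g
    · subst h2; rw [hxg']; linarith
    · rw [hother a h1 h2]; exact hx0 a ha
  have hb1 : ∀ a ∈ S, xx' a ≤ 1 := by
    intro a ha
    by_cases h1 : a = f
    · subst h1; rw [hxf']; linarith
    by_cases h2 : a = g
    · subst h2; rw [hxg']; nlinarith [hgfrac.2]
    · rw [hother a h1 h2]; exact hx1 a ha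
  -- sum decomposition
  have hgmem : g ∈ S.erase f := mem_erase.mpr ⟨hfg.symm, hg⟩
  have hSdecomp : insert f (insert g ((S.erase f).erase g)) = S := by
    rw [insert_erase hgmem, insert_erase hf]
  have hfnotin : f ∉ insert g ((S.erase f).erase g) := by
    simp only [mem_insert, mem_erase]
    rintro (h | ⟨-, h, -⟩)
    exacts [hfg h, h rfl]
  have hgnotin : g ∉ (S.erase f).erase g := notMem_erase _ _
  have hsum : ∀ φ : ι → ℝ → ℝ, (∑ a ∈ S, φ a (xx' a))
      = φ f (xx' f) + φ g (xx' g) + ∑ a ∈ (S.erase f).erase g, φ a (xx a) := by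
    intro φ
    conv_lhs => rw [← hSdecomp]
    rw [sum_insert hfnotin, sum_insert hgnotin]
    have : ∑ a ∈ (S.erase f).erase g, φ a (xx' a) = ∑ a ∈ (S.erase f).erase g, φ a (xx a) := by
      apply sum_congr rfl
      intro a ha
      rw [hother a (ne_of_mem_erase (mem_of_mem_erase ha)) (ne_of_mem_erase ha)]
    rw [this]; ring
  have hsum0 : ∀ φ : ι → ℝ → ℝ, (∑ a ∈ S, φ a (xx a))
      = φ f (xx f) + φ g (xx g) + ∑ a ∈ (S.erase f).erase g, φ a (xx a) := by
    intro φ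
    conv_lhs => rw [← hSdecomp]
    rw [sum_insert hfnotin, sum_insert hgnotin]; ring
  refine ⟨xx', hb0, hb1, ?_, ?_, ?_⟩
  · rw [hsum (fun a y => (dd a : ℝ) * y), hsum0 (fun a y => (dd a : ℝ) * y), hxf', hxg']
    ring
  · rw [hsum (fun a y => cc a * y), hsum0 (fun a y => cc a * y), hxf', hxg']
    nlinarith [hε0]
  · -- the fractional set shrinks
    have hmemf : f ∈ S.filter (fun a => 0 < xx a ∧ xx a < 1) :=
      mem_filter.mpr ⟨hf, hffrac⟩
    rcases min_cases ((1 - xx f) / (dd g : ℝ)) (xx g / (dd f : ℝ)) with ⟨hmin, _⟩ | ⟨hmin, hle⟩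
    · -- ε = (1 - xx f)/dd g : f becomes 1
      have hxf1 : xx' f = 1 := by
        rw [hxf', ← hε] at *
        rw [hmin] at hε ⊢
        field_simp
        ring
      apply lt_of_le_of_lt (card_le_card ?_) (card_erase_lt_of_mem hmemf)
      intro a ha
      rw [mem_filter] at ha
      rw [mem_erase]
      have haf : a ≠ f := by
        rintro rfl
        rw [hxf1] at ha
        exact absurd ha.2.2 (lt_irrefl 1)
      refine ⟨haf, mem_filter.mpr ⟨ha.1, ?_⟩⟩
      by_cases h2 : a = g
      · subst h2
        rw [hxg'] at ha
        constructor
        · nlinarith [ha.2.1, hε0]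
        · nlinarith [ha.2.2, hε0, hgfrac.2]
      · rw [hother a haf h2] at ha; exact ha.2
    · -- ε = xx g / dd f : g becomes 0
      have hmemg : g ∈ S.filter (fun a => 0 < xx a ∧ xx a < 1) :=
        mem_filter.mpr ⟨hg, hgfrac⟩
      have hxg0 : xx' g = 0 := by
        rw [hxg', ← hε] at *
        rw [hmin] at hε ⊢
        field_simp
        ring
      apply lt_of_le_of_lt (card_le_card ?_) (card_erase_lt_of_mem hmemg)
      intro a ha
      rw [mem_filter] at ha
      rw [mem_erase]
      have hag : a ≠ g := by
        rintro rfl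
        rw [hxg0] at ha
        exact absurd ha.2.1 (lt_irrefl 0)
      refine ⟨hag, mem_filter.mpr ⟨ha.1, ?_⟩⟩
      by_cases h1 : a = f
      · subst h1
        rw [hxf'] at ha
        constructor
        · nlinarith [ha.2.1, hε0, hffrac.1]
        · nlinarith [ha.2.2, hε0]
      · rw [hother a h1 hag] at ha; exact ha.2
end Knapsack
section Knapsack2

variable {ι : Type*} [DecidableEq ι]

/-- Uncrossing: any fractional knapsack solution is dominated by an integral set plus
a fraction of a single extra item. -/
private lemma uncross (S : Finset ι) (dd : ι → ℤ) (cc : ι → ℝ) (s : ℝ)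
    (hd1 : ∀ f ∈ S, 1 ≤ dd f) (hc : ∀ f ∈ S, 0 ≤ cc f) :
    ∀ (xx : ι → ℝ), (∀ f ∈ S, 0 ≤ xx f) → (∀ f ∈ S, xx f ≤ 1) →
    (∑ f ∈ S, (dd f : ℝ) * xx f ≤ s) →
    ∃ A ⊆ S, (∑ f ∈ A, (dd f : ℝ)) ≤ s ∧
      ((∑ f ∈ S, cc f * xx f ≤ ∑ f ∈ A, cc f) ∨
       (∃ g ∈ S, g ∉ A ∧ ∃ θ : ℝ, 0 ≤ θ ∧ θ ≤ 1 ∧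
         (∑ f ∈ A, (dd f : ℝ)) + θ * (dd g : ℝ) ≤ s ∧
         ∑ f ∈ S, cc f * xx f ≤ (∑ f ∈ A, cc f) + θ * cc g)) := by
  classical
  suffices H : ∀ (n : ℕ) (xx : ι → ℝ), (∀ f ∈ S, 0 ≤ xx f) → (∀ f ∈ S, xx f ≤ 1) →
      (∑ f ∈ S, (dd f : ℝ) * xx f ≤ s) →
      (S.filter (fun a => 0 < xx a ∧ xx a < 1)).card ≤ n →
      ∃ A ⊆ S, (∑ f ∈ A, (dd f : ℝ)) ≤ s ∧
      ((∑ f ∈ S, cc f * xx f ≤ ∑ f ∈ A, cc f) ∨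
       (∃ g ∈ S, g ∉ A ∧ ∃ θ : ℝ, 0 ≤ θ ∧ θ ≤ 1 ∧
         (∑ f ∈ A, (dd f : ℝ)) + θ * (dd g : ℝ) ≤ s ∧
         ∑ f ∈ S, cc f * xx f ≤ (∑ f ∈ A, cc f) + θ * cc g)) by
    intro xx h0 h1 hcap
    exact H _ xx h0 h1 hcap le_rfl
  intro n
  induction n with
  | zero =>
    intro xx hx0 hx1 hcap hcard
    -- no fractional coordinates
    have hfrac : ∀ a ∈ S, ¬(0 < xx a ∧ xx a < 1) := by
      intro a ha hcon
      have : a ∈ S.filter (fun a => 0 < xx a ∧ xx a < 1) := mem_filter.mpr ⟨ha, hcon⟩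
      rw [Nat.le_zero, card_eq_zero] at hcard
      rw [hcard] at this
      exact absurd this (notMem_empty a)
    -- every coordinate is 0 or 1
    have hx01 : ∀ a ∈ S, xx a = 0 ∨ xx a = 1 := by
      intro a ha
      rcases lt_or_ge 0 (xx a) with h | h
      · rcases lt_or_ge (xx a) 1 with h' | h'
        · exact absurd ⟨h, h'⟩ (hfrac a ha)
        · exact Or.inr (le_antisymm (hx1 a ha) h')
      · exact Or.inl (le_antisymm h (hx0 a ha))
    set A := S.filter (fun a => xx a = 1) with hA
    refine ⟨A, filter_subset _ _, ?_, Or.inl ?_⟩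
    · calc (∑ f ∈ A, (dd f : ℝ)) = ∑ f ∈ A, (dd f : ℝ) * xx f := by
            apply sum_congr rfl; intro f hf
            rw [(mem_filter.mp hf).2, mul_one]
        _ ≤ ∑ f ∈ S, (dd f : ℝ) * xx f := by
            apply sum_le_sum_of_subset_of_nonneg (filter_subset _ _)
            intro f hf _
            have := hd1 f hf
            have := hx0 f hf
            positivity
        _ ≤ s := hcap
    · calc (∑ f ∈ S, cc f * xx f) = ∑ f ∈ A, cc f * xx f := by
            symm
            apply sum_subset (filter_subset _ _)
            intro f hf hnf
            have : xx f = 0 := by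
              rcases hx01 f hf with h | h
              · exact h
              · exact absurd (mem_filter.mpr ⟨hf, h⟩) hnf
            rw [this, mul_zero]
        _ = ∑ f ∈ A, cc f := by
            apply sum_congr rfl; intro f hf
            rw [(mem_filter.mp hf).2, mul_one]
        _ ≤ ∑ f ∈ A, cc f := le_rfl
  | succ n IH =>
    intro xx hx0 hx1 hcap hcard
    by_cases hle : (S.filter (fun a => 0 < xx a ∧ xx a < 1)).card ≤ n
    · exact IH xx hx0 hx1 hcap hle
    push_neg at hle
    by_cases h2 : 1 < (S.filter (fun a => 0 < xx a ∧ xx a < 1)).card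
    · -- two fractional coordinates: uncross
      obtain ⟨f, hfm, g, hgm, hfg⟩ := one_lt_card.mp h2
      rw [mem_filter] at hfm hgm
      rcases le_total (cc g * (dd f : ℝ)) (cc f * (dd g : ℝ)) with hord | hord
      · obtain ⟨xx', h0', h1', heq, hprof, hlt⟩ :=
          uncross_step S dd cc xx hd1 hx0 hx1 hfm.1 hgm.1 hfg hfm.2 hgm.2 hord
        obtain ⟨A, hAS, hcapA, hdisj⟩ := IH xx' h0' h1' (by rw [heq]; exact hcap)
          (by omega)
        refine ⟨A, hAS, hcapA, ?_⟩
        rcases hdisj with h | ⟨g', hg', hg'A, θ, hθ0, hθ1, hcapθ, hprof'⟩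
        · exact Or.inl (le_trans hprof h)
        · exact Or.inr ⟨g', hg', hg'A, θ, hθ0, hθ1, hcapθ, le_trans hprof hprof'⟩
      · obtain ⟨xx', h0', h1', heq, hprof, hlt⟩ :=
          uncross_step S dd cc xx hd1 hx0 hx1 hgm.1 hfm.1 hfg.symm hgm.2 hfm.2 hord
        obtain ⟨A, hAS, hcapA, hdisj⟩ := IH xx' h0' h1' (by rw [heq]; exact hcap)
          (by omega)
        refine ⟨A, hAS, hcapA, ?_⟩
        rcases hdisj with h | ⟨g', hg', hg'A, θ, hθ0, hθ1, hcapθ, hprof'⟩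
        · exact Or.inl (le_trans hprof h)
        · exact Or.inr ⟨g', hg', hg'A, θ, hθ0, hθ1, hcapθ, le_trans hprof hprof'⟩
    · -- exactly one fractional coordinate g
      push_neg at h2
      have hcard1 : (S.filter (fun a => 0 < xx a ∧ xx a < 1)).card = 1 := by omega
      obtain ⟨g, hgsing⟩ := card_eq_one.mp hcard1
      have hgmem : g ∈ S.filter (fun a => 0 < xx a ∧ xx a < 1) := by rw [hgsing]; exact mem_singleton_self g
      rw [mem_filter] at hgmem
      obtain ⟨hgS, hgfrac⟩ := hgmem
      have hx01 : ∀ a ∈ S, a ≠ g → xx a = 0 ∨ xx a = 1 := by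
        intro a ha hag
        by_contra hcon
        push_neg at hcon
        have h0 : 0 < xx a := lt_of_le_of_ne (hx0 a ha) (Ne.symm hcon.1)
        have h1 : xx a < 1 := lt_of_le_of_ne (hx1 a ha) hcon.2
        have : a ∈ S.filter (fun a => 0 < xx a ∧ xx a < 1) := mem_filter.mpr ⟨ha, h0, h1⟩
        rw [hgsing, mem_singleton] at this
        exact hag this
      set A := S.filter (fun a => xx a = 1) with hA
      have hgnA : g ∉ A := by
        rw [hA, mem_filter]
        rintro ⟨-, h⟩
        rw [h] at hgfrac
        exact absurd hgfrac.2 (lt_irrefl 1)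
      have hsumA : (∑ f ∈ A, (dd f : ℝ)) + xx g * (dd g : ℝ) ≤ s := by
        calc (∑ f ∈ A, (dd f : ℝ)) + xx g * (dd g : ℝ)
            = (∑ f ∈ insert g A, (dd f : ℝ) * xx f) := by
              rw [sum_insert hgnA]
              have : ∑ f ∈ A, (dd f : ℝ) = ∑ f ∈ A, (dd f : ℝ) * xx f := by
                apply sum_congr rfl; intro f hf
                rw [(mem_filter.mp hf).2, mul_one]
              rw [this]; ring
          _ ≤ ∑ f ∈ S, (dd f : ℝ) * xx f := by
              apply sum_le_sum_of_subset_of_nonneg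
              · intro a ha
                rcases mem_insert.mp ha with rfl | ha'
                · exact hgS
                · exact filter_subset _ _ ha'
              · intro f hf _
                have := hd1 f hf
                have := hx0 f hf
                positivity
          _ ≤ s := hcap
      have hddg : (0:ℝ) ≤ (dd g : ℝ) * xx g := by
        have := hd1 g hgS
        have := hx0 g hgS
        positivity
      refine ⟨A, filter_subset _ _, by nlinarith, Or.inr ⟨g, hgS, hgnA, xx g, hgfrac.1.le,
        hgfrac.2.le, by nlinarith, ?_⟩⟩
      calc (∑ f ∈ S, cc f * xx f) = ∑ f ∈ insert g A, cc f * xx f := by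
            symm
            apply sum_subset
            · intro a ha
              rcases mem_insert.mp ha with rfl | ha'
              · exact hgS
              · exact filter_subset _ _ ha'
            · intro f hf hnf
              have hfg : f ≠ g := by rintro rfl; exact hnf (mem_insert_self f A)
              have : xx f = 0 := by
                rcases hx01 f hf hfg with h | h
                · exact h
                · exact absurd (mem_insert_of_mem (mem_filter.mpr ⟨hf, h⟩)) hnf
              rw [this, mul_zero]
        _ = (∑ f ∈ A, cc f) + xx g * cc g := by
            rw [sum_insert hgnA]
            have : ∑ f ∈ A, cc f * xx f = ∑ f ∈ A, cc f := by
              apply sum_congr rfl; intro f hf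
              rw [(mem_filter.mp hf).2, mul_one]
            rw [this]; ring
        _ ≤ (∑ f ∈ A, cc f) + xx g * cc g := le_rfl

end Knapsack2
section Knapsack3

variable {ι : Type*} [DecidableEq ι]

set_option maxHeartbeats 1000000 in
/-- The key knapsack inequality: `(2 - ξ)·V(b) + ξ·V(b - p) ≥ ∑ c x` whenever
`∑ d x ≤ b - p ξ`, where `V(m)` upper-bounds the profit of every integrally
feasible subset for capacity `m`. -/
private lemma knapsack_ineq (S : Finset ι) (dd : ι → ℤ) (cc xx : ι → ℝ) (b p : ℤ) (ξ : ℝ)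
    (Vb Vt : ℝ)
    (hd1 : ∀ f ∈ S, 1 ≤ dd f) (hdb : ∀ f ∈ S, dd f ≤ b) (hc : ∀ f ∈ S, 0 ≤ cc f)
    (hx0 : ∀ f ∈ S, 0 ≤ xx f) (hx1 : ∀ f ∈ S, xx f ≤ 1)
    (hp1 : 1 ≤ p) (hpb : p ≤ b) (hξ0 : 0 ≤ ξ) (hξ1 : ξ ≤ 1)
    (hcap : ∑ f ∈ S, (dd f : ℝ) * xx f ≤ (b : ℝ) - (p : ℝ) * ξ)
    (hVb0 : 0 ≤ Vb) (hVt0 : 0 ≤ Vt) (hVtb : Vt ≤ Vb)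
    (hVb : ∀ A ⊆ S, (∑ f ∈ A, dd f) ≤ b → ∑ f ∈ A, cc f ≤ Vb)
    (hVt : ∀ A ⊆ S, (∑ f ∈ A, dd f) ≤ b - p → ∑ f ∈ A, cc f ≤ Vt) :
    ∑ f ∈ S, cc f * xx f ≤ (2 - ξ) * Vb + ξ * Vt := by
  classical
  have hpξ : (0:ℝ) ≤ (p:ℝ) * ξ := by
    have : (0:ℝ) ≤ (p:ℝ) := by exact_mod_cast le_trans zero_le_one hp1
    positivity
  obtain ⟨A, hAS, hcapA, hdisj⟩ := uncross S dd cc ((b:ℝ) - (p:ℝ)*ξ) hd1 hc xx hx0 hx1 hcap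
  have hsumcast : (∑ f ∈ A, (dd f : ℝ)) = ((∑ f ∈ A, dd f : ℤ) : ℝ) := by push_cast; ring
  have hDAb : (∑ f ∈ A, dd f) ≤ b := by
    have : (∑ f ∈ A, (dd f : ℝ)) ≤ (b:ℝ) := le_trans hcapA (by linarith)
    rw [hsumcast] at this
    exact_mod_cast this
  have hCAVb : ∑ f ∈ A, cc f ≤ Vb := hVb A hAS hDAb
  have hCA0 : 0 ≤ ∑ f ∈ A, cc f := sum_nonneg fun f hf => hc f (hAS hf)
  have hRHSVb : Vb ≤ (2 - ξ) * Vb + ξ * Vt := by nlinarith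
  rcases hdisj with hW | ⟨g, hgS, hgA, θ, hθ0, hθ1, hcapθ, hW⟩
  · linarith
  · -- facts about g
    have hdg1 : 1 ≤ dd g := hd1 g hgS
    have hdgb : dd g ≤ b := hdb g hgS
    have hcg0 : 0 ≤ cc g := hc g hgS
    have hcgVb : cc g ≤ Vb := by
      have := hVb {g} (by simpa using hgS) (by simpa using hdgb)
      simpa using this
    by_cases hAt : (∑ f ∈ A, dd f) ≤ b - p
    · -- Case 1
      have hCAVt : ∑ f ∈ A, cc f ≤ Vt := hVt A hAS hAt
      have : θ * cc g ≤ cc g := by nlinarith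
      nlinarith
    · push_neg at hAt
      have hAt' : b - p + 1 ≤ ∑ f ∈ A, dd f := hAt
      by_cases hgt : dd g ≤ b - p
      · -- Case 2
        have hcgVt : cc g ≤ Vt := by
          have := hVt {g} (by simpa using hgS) (by simpa using hgt)
          simpa using this
        have h1 : θ * cc g ≤ cc g := by nlinarith
        have h2 : cc g ≤ ξ * Vt + (1 - ξ) * Vb := by nlinarith
        nlinarith
      · push_neg at hgt
        have hgt' : b - p + 1 ≤ dd g := hgt
        by_cases hAg : (∑ f ∈ A, dd f) + dd g ≤ b
        · -- Case 3
          have hins : ∑ f ∈ insert g A, cc f ≤ Vb := by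
            apply hVb (insert g A)
            · intro a ha
              rcases mem_insert.mp ha with rfl | ha'
              · exact hgS
              · exact hAS ha'
            · rw [sum_insert hgA]; omega
          rw [sum_insert hgA] at hins
          have : θ * cc g ≤ cc g := by nlinarith
          nlinarith
        · -- Case 4
          push_neg at hAg
          have hAg' : b + 1 ≤ (∑ f ∈ A, dd f) + dd g := hAg
          -- show θ ≤ 1 - ξ
          have hdgR : (1:ℝ) ≤ (dd g : ℝ) := by exact_mod_cast hdg1
          have hθξ : θ ≤ 1 - ξ := by
            rcases le_or_gt (dd g) p with hgp | hpg
            · -- dd g ≤ p : use ∑_A dd ≥ b + 1 - dd g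
              have hA1 : ((b:ℝ) + 1 - (dd g : ℝ)) ≤ (∑ f ∈ A, (dd f : ℝ)) := by
                rw [hsumcast]
                have : b + 1 - dd g ≤ ∑ f ∈ A, dd f := by omega
                exact_mod_cast this
              have hgpR : (dd g : ℝ) ≤ (p : ℝ) := by exact_mod_cast hgp
              -- θ * dd g ≤ dd g - 1 - p ξ and ξ dd g ≤ ξ p
              have h1 : θ * (dd g : ℝ) ≤ (dd g : ℝ) - 1 - (p:ℝ) * ξ := by linarith
              have h2 : ξ * (dd g : ℝ) ≤ (p:ℝ) * ξ := by
                rw [mul_comm (p:ℝ) ξ]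
                exact mul_le_mul_of_nonneg_left hgpR hξ0
              have h3 : θ * (dd g : ℝ) ≤ (1 - ξ) * (dd g : ℝ) - 1 := by
                have e : (1 - ξ) * (dd g : ℝ) - 1 = (dd g : ℝ) - 1 - ξ * (dd g : ℝ) := by ring
                rw [e]
                linarith
              by_contra hcon
              push_neg at hcon
              have hdgpos : (0:ℝ) < (dd g : ℝ) := lt_of_lt_of_le zero_lt_one hdgR
              have h6 : (1 - ξ) * (dd g : ℝ) < θ * (dd g : ℝ) :=
                mul_lt_mul_of_pos_right hcon hdgpos
              linarith
            · -- p < dd g : use ∑_A dd ≥ b - p + 1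
              have hA1 : ((b:ℝ) - (p:ℝ) + 1) ≤ (∑ f ∈ A, (dd f : ℝ)) := by
                rw [hsumcast]
                exact_mod_cast hAt'
              have hpgR : (p : ℝ) ≤ (dd g : ℝ) := by exact_mod_cast hpg.le
              have h1 : θ * (dd g : ℝ) ≤ (p:ℝ) * (1 - ξ) - 1 := by
                have : (p:ℝ) * (1 - ξ) - 1 = ((b:ℝ) - (p:ℝ)*ξ) - ((b:ℝ) - (p:ℝ) + 1) := by ring
                rw [this]
                linarith
              have h2 : (p:ℝ) * (1 - ξ) ≤ (dd g : ℝ) * (1 - ξ) :=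
                mul_le_mul_of_nonneg_right hpgR (by linarith)
              have h3 : θ * (dd g : ℝ) ≤ (1 - ξ) * (dd g : ℝ) - 1 := by
                have e : (dd g : ℝ) * (1 - ξ) = (1 - ξ) * (dd g : ℝ) := mul_comm _ _
                linarith
              by_contra hcon
              push_neg at hcon
              have hdgpos : (0:ℝ) < (dd g : ℝ) := lt_of_lt_of_le zero_lt_one hdgR
              have h6 : (1 - ξ) * (dd g : ℝ) < θ * (dd g : ℝ) :=
                mul_lt_mul_of_pos_right hcon hdgpos
              linarith
          have hth1 : θ * cc g ≤ (1 - ξ) * cc g := mul_le_mul_of_nonneg_right hθξ hcg0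
          have hth2 : (1 - ξ) * cc g ≤ (1 - ξ) * Vb :=
            mul_le_mul_of_nonneg_left hcgVb (by linarith)
          have hξVt : 0 ≤ ξ * Vt := mul_nonneg hξ0 hVt0
          linarith

end Knapsack3
section Graph

open SimpleGraph

variable {V : Type*} [Fintype V] [DecidableEq V]

private lemma mem_of_adjF {F : Finset (Sym2 V)} {a b : V}
    (h : (SimpleGraph.fromEdgeSet (F : Set (Sym2 V))).Adj a b) : s(a, b) ∈ F ∧ a ≠ b := by
  rw [SimpleGraph.fromEdgeSet_adj] at h
  exact ⟨by exact_mod_cast h.1, h.2⟩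

private lemma adj_of_memF {F : Finset (Sym2 V)} (hdiag : ∀ e ∈ F, ¬ e.IsDiag) {a b : V}
    (h : s(a, b) ∈ F) : (SimpleGraph.fromEdgeSet (F : Set (Sym2 V))).Adj a b := by
  rw [SimpleGraph.fromEdgeSet_adj]
  refine ⟨by exact_mod_cast h, fun hab => ?_⟩
  exact hdiag _ h (by rw [hab]; exact Sym2.mk_isDiag_iff.mpr rfl)

/-- In a finite acyclic graph given by a nonempty finite edge set, there is a vertex `v`
and a set `P` of at most one edge at `v` such that all other edges at `v` lead to leaves. -/
private lemma exists_leaf_star (F : Finset (Sym2 V)) (hne : F.Nonempty)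
    (hdiag : ∀ e ∈ F, ¬ e.IsDiag)
    (hacyc : (SimpleGraph.fromEdgeSet (F : Set (Sym2 V))).IsAcyclic) :
    ∃ (v : V) (P : Finset (Sym2 V)), P ⊆ F.filter (fun e => v ∈ e) ∧ P.card ≤ 1 ∧
      (F.filter (fun e => v ∈ e) \ P).Nonempty ∧
      ∀ f ∈ F.filter (fun e => v ∈ e) \ P, ∀ w ∈ f, w ≠ v →
        F.filter (fun e => w ∈ e) = {f} := by
  classical
  set G' := SimpleGraph.fromEdgeSet (F : Set (Sym2 V)) with hG'
  have hother : ∀ {e : Sym2 V}, e ∈ F → ∀ {a : V}, a ∈ e → ∃ b, e = s(a, b) ∧ b ≠ a := by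
    intro e heF a ha
    obtain ⟨b, hb⟩ := Sym2.mem_iff_exists.mp ha
    refine ⟨b, hb, ?_⟩
    rintro rfl
    exact hdiag e heF (hb ▸ Sym2.mk_isDiag_iff.mpr rfl)
  -- find an adjacency
  obtain ⟨e₀, he₀⟩ := hne
  have ha0 : e₀.out.1 ∈ e₀ := Sym2.out_fst_mem e₀
  obtain ⟨b₀, hb₀, hb₀ne⟩ := hother he₀ ha0
  have hadj₀ : G'.Adj e₀.out.1 b₀ := adj_of_memF hdiag (hb₀ ▸ he₀)
  -- the set of path lengths
  have hcard2 : 1 < Fintype.card V :=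
    Fintype.one_lt_card_iff_nontrivial.mpr ⟨⟨_, _, hadj₀.ne⟩⟩
  set T : Finset ℕ := (Finset.range (Fintype.card V)).filter
    (fun n => ∃ (u w : V) (q : G'.Walk u w), q.IsPath ∧ q.length = n) with hT
  have hpath₀ : (SimpleGraph.Walk.cons hadj₀ SimpleGraph.Walk.nil).IsPath := by
    rw [SimpleGraph.Walk.cons_isPath_iff]
    exact ⟨SimpleGraph.Walk.IsPath.nil, by simp [hadj₀.ne]⟩
  have hT1 : 1 ∈ T := by
    rw [hT, Finset.mem_filter]
    exact ⟨Finset.mem_range.mpr hcard2, _, _, _, hpath₀, rfl⟩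
  set N := T.max' ⟨1, hT1⟩ with hN
  have hmax : ∀ (a c : V) (q : G'.Walk a c), q.IsPath → q.length ≤ N := by
    intro a c q hq
    apply T.le_max'
    rw [hT, Finset.mem_filter]
    exact ⟨Finset.mem_range.mpr hq.length_lt, a, c, q, hq, rfl⟩
  obtain ⟨-, u, w, p, hp, hplen'⟩ := Finset.mem_filter.mp (T.max'_mem ⟨1, hT1⟩)
  have hplen : p.length = N := by rw [hN]; exact hplen'
  have hN1 : 1 ≤ N := T.le_max' 1 hT1
  cases p with
  | nil => rw [SimpleGraph.Walk.length_nil] at hplen; omega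
  | @cons _ y _ h₁ q =>
    rw [SimpleGraph.Walk.cons_isPath_iff] at hp
    obtain ⟨hq, hu⟩ := hp
    cases q with
    | nil =>
      -- maximal path has length 1 : the component of u is a single edge
      rw [SimpleGraph.Walk.length_cons, SimpleGraph.Walk.length_nil] at hplen
      refine ⟨u, ∅, Finset.empty_subset _, by simp, ?_, ?_⟩
      · rw [Finset.sdiff_empty]
        exact ⟨s(u, w), Finset.mem_filter.mpr ⟨(mem_of_adjF h₁).1, Sym2.mem_mk_left _ _⟩⟩
      · intro f hf w' hw' hwu
        rw [Finset.sdiff_empty, Finset.mem_filter] at hf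
        obtain ⟨hfF, huf⟩ := hf
        obtain ⟨z, hz, hzu⟩ := hother hfF huf
        have hwz : w' = z := by
          rw [hz] at hw'
          rcases Sym2.mem_iff.mp hw' with h | h
          · exact absurd h hwu
          · exact h
        subst hwz
        have hadj_uw : G'.Adj u w' := adj_of_memF hdiag (hz ▸ hfF)
        ext e'
        simp only [Finset.mem_filter, Finset.mem_singleton]
        constructor
        · rintro ⟨he'F, hw'e'⟩
          obtain ⟨y', hy', hy'w⟩ := hother he'F hw'e'
          by_cases hy'u : y' = u
          · rw [hy', hy'u, hz, Sym2.eq_swap]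
          · exfalso
            have hadj2 : G'.Adj w' y' := adj_of_memF hdiag (hy' ▸ he'F)
            have hlong : (SimpleGraph.Walk.cons hadj_uw
                (SimpleGraph.Walk.cons hadj2 SimpleGraph.Walk.nil)).IsPath := by
              rw [SimpleGraph.Walk.cons_isPath_iff, SimpleGraph.Walk.cons_isPath_iff]
              refine ⟨⟨SimpleGraph.Walk.IsPath.nil, ?_⟩, ?_⟩
              · simp only [SimpleGraph.Walk.support_nil, List.mem_singleton]
                exact fun h => hy'w h.symm
              · simp only [SimpleGraph.Walk.support_cons, SimpleGraph.Walk.support_nil,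
                  List.mem_cons, List.mem_singleton]
                push_neg
                exact ⟨fun h => hwu h.symm, fun h => hy'u h.symm, by simp⟩
            have := hmax _ _ _ hlong
            simp only [SimpleGraph.Walk.length_cons, SimpleGraph.Walk.length_nil] at this
            omega
        · rintro rfl
          exact ⟨hfF, hw'⟩
    | @cons _ z₂ _ h₂ r =>
      -- maximal path has length ≥ 2 : use its second vertex
      rw [SimpleGraph.Walk.cons_isPath_iff] at hq
      obtain ⟨hr, hy⟩ := hq
      rw [SimpleGraph.Walk.support_cons] at hu
      have huy : u ≠ y := h₁.ne
      have huz₂ : u ≠ z₂ := by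
        intro h
        apply hu
        rw [List.mem_cons]
        exact Or.inr (h ▸ r.start_mem_support)
      have hyz₂F : s(y, z₂) ∈ F := (mem_of_adjF h₂).1
      have huyF : s(u, y) ∈ F := (mem_of_adjF h₁).1
      have hne_uy : s(u, y) ≠ s(y, z₂) := by
        intro hEq
        rcases Sym2.eq_iff.mp hEq with ⟨h1, -⟩ | ⟨h1, -⟩
        · exact huy h1
        · exact huz₂ h1
      refine ⟨y, {s(y, z₂)}, ?_, by simp, ?_, ?_⟩
      · rw [Finset.singleton_subset_iff, Finset.mem_filter]
        exact ⟨hyz₂F, Sym2.mem_mk_left _ _⟩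
      · refine ⟨s(u, y), ?_⟩
        rw [Finset.mem_sdiff, Finset.mem_filter]
        exact ⟨⟨huyF, Sym2.mem_mk_right _ _⟩, by simpa using hne_uy⟩
      · intro f hf w' hw' hw'y
        rw [Finset.mem_sdiff, Finset.mem_filter, Finset.mem_singleton] at hf
        obtain ⟨⟨hfF, hyf⟩, hfP⟩ := hf
        obtain ⟨z, hz, hzy⟩ := hother hfF hyf
        have hwz : w' = z := by
          rw [hz] at hw'
          rcases Sym2.mem_iff.mp hw' with h | h
          · exact absurd h hw'y
          · exact h
        subst hwz
        have hzz₂ : w' ≠ z₂ := by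
          intro h
          exact hfP (by rw [hz, h])
        have hadj_yz : G'.Adj y w' := adj_of_memF hdiag (hz ▸ hfF)
        -- key fact : the edge s(y, w') is not an edge of q = cons h₂ r
        have hkey : s(y, w') ∉ (SimpleGraph.Walk.cons h₂ r).edges := by
          intro hmem
          rw [SimpleGraph.Walk.edges_cons] at hmem
          rcases List.mem_cons.mp hmem with heq | hmem'
          · rw [Sym2.eq_iff] at heq
            rcases heq with ⟨-, h⟩ | ⟨h, -⟩
            · exact hzz₂ h
            · exact h₂.ne h
          · exact hy (r.fst_mem_support_of_mem_edges hmem')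
        -- w' is not on the path q
        have hzq : w' ∉ (SimpleGraph.Walk.cons h₂ r).support := by
          intro hzq
          set q : G'.Walk y w := SimpleGraph.Walk.cons h₂ r with hqdef
          have hq' : q.IsPath := by
            rw [hqdef, SimpleGraph.Walk.cons_isPath_iff]
            exact ⟨hr, hy⟩
          have hP1 : (SimpleGraph.Walk.cons hadj_yz SimpleGraph.Walk.nil).IsPath := by
            rw [SimpleGraph.Walk.cons_isPath_iff]
            exact ⟨SimpleGraph.Walk.IsPath.nil, by simp [hadj_yz.ne]⟩
          have hEQ := hacyc.path_unique ⟨q.takeUntil w' hzq, hq'.takeUntil hzq⟩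
            ⟨SimpleGraph.Walk.cons hadj_yz SimpleGraph.Walk.nil, hP1⟩
          have hwalks : q.takeUntil w' hzq = SimpleGraph.Walk.cons hadj_yz SimpleGraph.Walk.nil :=
            congrArg Subtype.val hEQ
          have : s(y, w') ∈ (q.takeUntil w' hzq).edges := by
            rw [hwalks]
            simp
          exact hkey (q.edges_takeUntil_subset hzq this)
        -- main goal : every edge at w' is f
        ext e'
        simp only [Finset.mem_filter, Finset.mem_singleton]
        constructor
        · rintro ⟨he'F, hw'e'⟩
          obtain ⟨y', hy', hy'w⟩ := hother he'F hw'e'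
          by_cases hy'y : y' = y
          · rw [hy', hy'y, hz, Sym2.eq_swap]
          · exfalso
            have hadj_zy' : G'.Adj w' y' := adj_of_memF hdiag (hy' ▸ he'F)
            set q : G'.Walk y w := SimpleGraph.Walk.cons h₂ r with hqdef
            have hq' : q.IsPath := by
              rw [hqdef, SimpleGraph.Walk.cons_isPath_iff]
              exact ⟨hr, hy⟩
            by_cases hy'q : y' ∈ q.support
            · -- two distinct paths from y to y'
              have hP1 : (SimpleGraph.Walk.cons hadj_yz
                  (SimpleGraph.Walk.cons hadj_zy' SimpleGraph.Walk.nil)).IsPath := by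
                rw [SimpleGraph.Walk.cons_isPath_iff, SimpleGraph.Walk.cons_isPath_iff]
                refine ⟨⟨SimpleGraph.Walk.IsPath.nil, ?_⟩, ?_⟩
                · simp only [SimpleGraph.Walk.support_nil, List.mem_singleton]
                  exact fun h => hy'w h.symm
                · simp only [SimpleGraph.Walk.support_cons, SimpleGraph.Walk.support_nil,
                    List.mem_cons, List.mem_singleton]
                  push_neg
                  exact ⟨fun h => hadj_yz.ne h, fun h => hy'y h.symm, by simp⟩
              have hEQ := hacyc.path_unique ⟨q.takeUntil y' hy'q, hq'.takeUntil hy'q⟩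
                ⟨_, hP1⟩
              have hwalks : q.takeUntil y' hy'q = SimpleGraph.Walk.cons hadj_yz
                  (SimpleGraph.Walk.cons hadj_zy' SimpleGraph.Walk.nil) :=
                congrArg Subtype.val hEQ
              have : s(y, w') ∈ (q.takeUntil y' hy'q).edges := by
                rw [hwalks]
                simp
              exact hkey (q.edges_takeUntil_subset hy'q this)
            · -- extend the maximal path : contradiction
              have hlong : (SimpleGraph.Walk.cons hadj_zy'.symm
                  (SimpleGraph.Walk.cons hadj_yz.symm q)).IsPath := by
                rw [SimpleGraph.Walk.cons_isPath_iff, SimpleGraph.Walk.cons_isPath_iff]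
                refine ⟨⟨hq', hzq⟩, ?_⟩
                rw [SimpleGraph.Walk.support_cons]
                simp only [List.mem_cons]
                push_neg
                exact ⟨fun h => hy'w h, hy'q⟩
              have hbound := hmax _ _ _ hlong
              have hlen : q.length = N - 1 := by
                rw [SimpleGraph.Walk.length_cons] at hplen
                omega
              simp only [SimpleGraph.Walk.length_cons] at hbound
              omega
        · rintro rfl
          exact ⟨hfF, hw'⟩

end Graph
section Main

variable {V : Type*} [Fintype V] [DecidableEq V]

private lemma acyclic_mono {F F' : Finset (Sym2 V)} (hsub : F' ⊆ F)
    (h : (SimpleGraph.fromEdgeSet (F : Set (Sym2 V))).IsAcyclic) :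
    (SimpleGraph.fromEdgeSet (F' : Set (Sym2 V))).IsAcyclic := by
  intro v p hp
  exact h (p.mapLe (SimpleGraph.fromEdgeSet_mono (Finset.coe_subset.mpr hsub)))
    (hp.mapLe _)

private lemma knapsack_max (S : Finset (Sym2 V)) (dd : Sym2 V → ℤ) (cc : Sym2 V → ℝ)
    (hc : ∀ f ∈ S, 0 ≤ cc f) (m : ℤ) (hm : 0 ≤ m) :
    ∃ A ⊆ S, (∑ f ∈ A, dd f) ≤ m ∧ 0 ≤ (∑ f ∈ A, cc f) ∧
      ∀ B ⊆ S, (∑ f ∈ B, dd f) ≤ m → (∑ f ∈ B, cc f) ≤ ∑ f ∈ A, cc f := by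
  classical
  have hne : (S.powerset.filter (fun A => (∑ f ∈ A, dd f) ≤ m)).Nonempty :=
    ⟨∅, by simp [hm]⟩
  obtain ⟨A, hA, hAmax⟩ := Finset.exists_max_image _ (fun A => ∑ f ∈ A, cc f) hne
  rw [Finset.mem_filter, Finset.mem_powerset] at hA
  refine ⟨A, hA.1, hA.2, Finset.sum_nonneg (fun f hf => hc f (hA.1 hf)), ?_⟩
  intro B hB hBm
  exact hAmax B (Finset.mem_filter.mpr ⟨Finset.mem_powerset.mpr hB, hBm⟩)

set_option maxHeartbeats 2000000 in
private lemma main_induction :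
    ∀ (N : ℕ) (F : Finset (Sym2 V)) (d : Sym2 V → V → ℤ) (b : V → ℤ) (c x : Sym2 V → ℝ),
    F.card ≤ N →
    (∀ e ∈ F, ¬ e.IsDiag) →
    (∀ e ∈ F, ∀ u ∈ e, 1 ≤ d e u) →
    (∀ u, 1 ≤ b u) →
    (∀ e ∈ F, ∀ u ∈ e, d e u ≤ b u) →
    (∀ e ∈ F, 0 ≤ c e) →
    (∀ e ∈ F, 0 ≤ x e) → (∀ e ∈ F, x e ≤ 1) →
    (∀ u, ∑ e ∈ F.filter (fun e => u ∈ e), (d e u : ℝ) * x e ≤ (b u : ℝ)) →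
    (SimpleGraph.fromEdgeSet (F : Set (Sym2 V))).IsAcyclic →
    ∃ M ⊆ F, (∀ u, ∑ e ∈ M.filter (fun e => u ∈ e), d e u ≤ b u) ∧
      (1/2 : ℝ) * (∑ e ∈ F, c e * x e) ≤ ∑ e ∈ M, c e := by
  classical
  intro N
  induction N with
  | zero =>
    intro F d b c x hcard _ _ hb _ _ _ _ _ _
    have hF : F = ∅ := Finset.card_eq_zero.mp (Nat.le_zero.mp hcard)
    subst hF
    refine ⟨∅, Finset.Subset.refl _, fun u => ?_, by simp⟩
    simp only [Finset.filter_empty, Finset.sum_empty]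
    exact le_trans zero_le_one (hb u)
  | succ N IH =>
    intro F d b c x hcard hdiag hd hb hnoclip hc hx0 hx1 hxcap hacyc
    rcases F.eq_empty_or_nonempty with rfl | hne
    · refine ⟨∅, Finset.Subset.refl _, fun u => ?_, by simp⟩
      simp only [Finset.filter_empty, Finset.sum_empty]
      exact le_trans zero_le_one (hb u)
    obtain ⟨v, P, hPsub, hPcard, hSne, hleaf⟩ := exists_leaf_star F hne hdiag hacyc
    set S : Finset (Sym2 V) := F.filter (fun e => v ∈ e) \ P with hSdef
    have hSsubF : S ⊆ F := Finset.Subset.trans Finset.sdiff_subset (Finset.filter_subset _ _)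
    have hSv : ∀ f ∈ S, v ∈ f := fun f hf =>
      (Finset.mem_filter.mp (Finset.mem_sdiff.mp hf).1).2
    have hbv0 : (0:ℤ) ≤ b v := le_trans zero_le_one (hb v)
    have hδS : ∀ e, e ∈ F → v ∈ e → e ∉ S → e ∈ P := by
      intro e heF hev heS
      by_contra hP
      exact heS (Finset.mem_sdiff.mpr ⟨Finset.mem_filter.mpr ⟨heF, hev⟩, hP⟩)
    -- restricted fractional solutions remain feasible
    have hxcapsub : ∀ (F₁ : Finset (Sym2 V)), F₁ ⊆ F →
        ∀ u, ∑ e ∈ F₁.filter (fun e => u ∈ e), (d e u : ℝ) * x e ≤ (b u : ℝ) := by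
      intro F₁ h u
      refine le_trans (Finset.sum_le_sum_of_subset_of_nonneg
        (Finset.filter_subset_filter _ h) ?_) (hxcap u)
      intro e he _
      rw [Finset.mem_filter] at he
      have h1 : (0:ℝ) ≤ (d e u : ℝ) := by
        exact_mod_cast le_trans zero_le_one (hd e he.1 u he.2)
      exact mul_nonneg h1 (hx0 e he.1)
    have hcardless : ∀ (F₁ : Finset (Sym2 V)), F₁ ⊆ F \ S → F₁.card ≤ N := by
      intro F₁ h
      have h1 : F \ S ⊂ F := Finset.sdiff_ssubset hSsubF hSne
      have h2 := Finset.card_le_card h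
      have h3 := Finset.card_lt_card h1
      omega
    -- gluing a knapsack subset at v onto a solution avoiding S
    have hglue : ∀ (M' A : Finset (Sym2 V)), M' ⊆ F \ S → A ⊆ S →
        (∀ u, ∑ e ∈ M'.filter (fun e => u ∈ e), d e u ≤ b u) →
        ((∑ e ∈ M'.filter (fun e => v ∈ e), d e v) + (∑ f ∈ A, d f v) ≤ b v) →
        (∀ u, ∑ e ∈ (M' ∪ A).filter (fun e => u ∈ e), d e u ≤ b u) := by
      intro M' A hM' hA hM'feas hv u
      have hdisj : Disjoint M' A := by
        rw [Finset.disjoint_left]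
        intro e he hea
        exact (Finset.mem_sdiff.mp (hM' he)).2 (hA hea)
      rw [Finset.filter_union, Finset.sum_union (Finset.disjoint_filter_filter hdisj)]
      by_cases huv : u = v
      · subst huv
        have hAfil : A.filter (fun e => u ∈ e) = A :=
          Finset.filter_true_of_mem (fun f hf => hSv f (hA hf))
        rw [hAfil]
        exact hv
      · by_cases huS : ∃ f ∈ S, u ∈ f
        · obtain ⟨f0, hf0S, huf0⟩ := huS
          have hleaf' : F.filter (fun e => u ∈ e) = {f0} := hleaf f0 hf0S u huf0 huv
          have hM'empty : M'.filter (fun e => u ∈ e) = ∅ := by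
            rw [Finset.eq_empty_iff_forall_notMem]
            intro e he
            rw [Finset.mem_filter] at he
            have heF : e ∈ F \ S := hM' he.1
            have h2 : e ∈ F.filter (fun e => u ∈ e) :=
              Finset.mem_filter.mpr ⟨(Finset.mem_sdiff.mp heF).1, he.2⟩
            rw [hleaf', Finset.mem_singleton] at h2
            subst h2
            exact (Finset.mem_sdiff.mp heF).2 hf0S
          have hAsub : A.filter (fun e => u ∈ e) ⊆ {f0} := by
            intro e he
            rw [Finset.mem_filter] at he
            rw [← hleaf']
            exact Finset.mem_filter.mpr ⟨hSsubF (hA he.1), he.2⟩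
          rw [hM'empty]
          simp only [Finset.sum_empty, zero_add]
          rcases Finset.subset_singleton_iff.mp hAsub with h0 | h0 <;> rw [h0]
          · simpa using le_trans zero_le_one (hb u)
          · simpa using hnoclip f0 (hSsubF hf0S) u huf0
        · push_neg at huS
          have hAempty : A.filter (fun e => u ∈ e) = ∅ := by
            rw [Finset.eq_empty_iff_forall_notMem]
            intro e he
            rw [Finset.mem_filter] at he
            exact huS e (hA he.1) he.2
          rw [hAempty]
          simp only [Finset.sum_empty, add_zero]
          exact hM'feas u
    have hgluesum : ∀ (M' A : Finset (Sym2 V)), M' ⊆ F \ S → A ⊆ S →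
        (∑ e ∈ M' ∪ A, c e) = (∑ e ∈ M', c e) + (∑ f ∈ A, c f) := by
      intro M' A hM' hA
      apply Finset.sum_union
      rw [Finset.disjoint_left]
      intro e he hea
      exact (Finset.mem_sdiff.mp (hM' he)).2 (hA hea)
    have hsplit : (∑ e ∈ F \ S, c e * x e) + (∑ e ∈ S, c e * x e) = ∑ e ∈ F, c e * x e :=
      Finset.sum_sdiff hSsubF
    -- the unconstrained knapsack maximizer at v
    obtain ⟨Af, hAfS, hAfcap, hAf0, hAfmax⟩ :=
      knapsack_max S (fun f => d f v) c (fun f hf => hc f (hSsubF hf)) (b v) hbv0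
    have hcapδ : (∑ e ∈ S, (d e v : ℝ) * x e) + (∑ e ∈ P, (d e v : ℝ) * x e)
        = ∑ e ∈ F.filter (fun e => v ∈ e), (d e v : ℝ) * x e := Finset.sum_sdiff hPsub
    rcases P.eq_empty_or_nonempty with hP | ⟨ep, hep⟩
    · -- CASE 1 : no parent edge, the edges at v form a star component
      have hSδ : S = F.filter (fun e => v ∈ e) := by rw [hSdef, hP, Finset.sdiff_empty]
      have hScap : ∑ e ∈ S, (d e v : ℝ) * x e ≤ (b v : ℝ) := by
        rw [hSδ]; exact hxcap v
      have hknap := knapsack_ineq S (fun f => d f v) c x (b v) (b v) 0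
        (∑ f ∈ Af, c f) (∑ f ∈ Af, c f)
        (fun f hf => hd f (hSsubF hf) v (hSv f hf))
        (fun f hf => hnoclip f (hSsubF hf) v (hSv f hf))
        (fun f hf => hc f (hSsubF hf))
        (fun f hf => hx0 f (hSsubF hf)) (fun f hf => hx1 f (hSsubF hf))
        (hb v) le_rfl le_rfl zero_le_one
        (by rw [mul_zero, sub_zero]; exact hScap)
        hAf0 hAf0 le_rfl
        hAfmax
        (fun A hA h => hAfmax A hA (le_trans h (by omega)))
      obtain ⟨M', hM'sub, hM'feas, hM'prof⟩ := IH (F \ S) d b c x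
        (hcardless _ (Finset.Subset.refl _))
        (fun e he => hdiag e (Finset.sdiff_subset he))
        (fun e he => hd e (Finset.sdiff_subset he))
        hb
        (fun e he => hnoclip e (Finset.sdiff_subset he))
        (fun e he => hc e (Finset.sdiff_subset he))
        (fun e he => hx0 e (Finset.sdiff_subset he))
        (fun e he => hx1 e (Finset.sdiff_subset he))
        (hxcapsub _ Finset.sdiff_subset)
        (acyclic_mono Finset.sdiff_subset hacyc)
      have hM'v : M'.filter (fun e => v ∈ e) = ∅ := by
        rw [Finset.eq_empty_iff_forall_notMem]
        intro e he
        rw [Finset.mem_filter] at he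
        have heFS := hM'sub he.1
        rw [Finset.mem_sdiff] at heFS
        apply heFS.2
        rw [hSδ]
        exact Finset.mem_filter.mpr ⟨heFS.1, he.2⟩
      have hv : (∑ e ∈ M'.filter (fun e => v ∈ e), d e v) + (∑ f ∈ Af, d f v) ≤ b v := by
        rw [hM'v]
        simpa using hAfcap
      refine ⟨M' ∪ Af, ?_, hglue _ _ hM'sub hAfS hM'feas hv, ?_⟩
      · exact Finset.union_subset (Finset.Subset.trans hM'sub Finset.sdiff_subset)
          (Finset.Subset.trans hAfS hSsubF)
      · rw [hgluesum M' Af hM'sub hAfS, ← hsplit]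
        have hknap' : ∑ e ∈ S, c e * x e ≤ 2 * (∑ f ∈ Af, c f) := by linarith
        linarith
    · -- CASE 2 : there is a parent edge ep at v
      have hPsing : P = {ep} := by
        apply Finset.eq_singleton_iff_unique_mem.mpr
        exact ⟨hep, fun y hy => Finset.card_le_one.mp hPcard y hy ep hep⟩
      have hepδ : ep ∈ F.filter (fun e => v ∈ e) := hPsub hep
      have hepF : ep ∈ F := (Finset.mem_filter.mp hepδ).1
      have hvep : v ∈ ep := (Finset.mem_filter.mp hepδ).2
      have hepS : ep ∉ S := by
        intro h
        exact (Finset.mem_sdiff.mp h).2 hep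
      have hdp1 : 1 ≤ d ep v := hd ep hepF v hvep
      have hdpb : d ep v ≤ b v := hnoclip ep hepF v hvep
      obtain ⟨Ar, hArS, hArcap, hAr0, hArmax⟩ :=
        knapsack_max S (fun f => d f v) c (fun f hf => hc f (hSsubF hf)) (b v - d ep v)
          (by omega)
      have hVrf : (∑ f ∈ Ar, c f) ≤ ∑ f ∈ Af, c f :=
        hAfmax Ar hArS (le_trans hArcap (by omega))
      have hcapv : (∑ e ∈ S, (d e v : ℝ) * x e) + (d ep v : ℝ) * x ep ≤ (b v : ℝ) := by
        rw [hPsing, Finset.sum_singleton] at hcapδ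
        rw [hcapδ]
        exact hxcap v
      have hknap := knapsack_ineq S (fun f => d f v) c x (b v) (d ep v) (x ep)
        (∑ f ∈ Af, c f) (∑ f ∈ Ar, c f)
        (fun f hf => hd f (hSsubF hf) v (hSv f hf))
        (fun f hf => hnoclip f (hSsubF hf) v (hSv f hf))
        (fun f hf => hc f (hSsubF hf))
        (fun f hf => hx0 f (hSsubF hf)) (fun f hf => hx1 f (hSsubF hf))
        hdp1 hdpb (hx0 ep hepF) (hx1 ep hepF)
        (by linarith)
        hAf0 hAr0 hVrf
        hAfmax
        hArmax
      have hepFS : ep ∈ F \ S := Finset.mem_sdiff.mpr ⟨hepF, hepS⟩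
      by_cases hct : 0 ≤ c ep + (∑ f ∈ Ar, c f) - ∑ f ∈ Af, c f
      · -- keep ep with modified profit
        set c' : Sym2 V → ℝ := fun e => if e = ep then
            c ep + (∑ f ∈ Ar, c f) - ∑ f ∈ Af, c f else c e with hc'def
        have hc'ep : c' ep = c ep + (∑ f ∈ Ar, c f) - ∑ f ∈ Af, c f := by
          rw [hc'def]; simp
        have hc'off : ∀ e, e ≠ ep → c' e = c e := by
          intro e h; rw [hc'def]; simp [h]
        obtain ⟨M', hM'sub, hM'feas, hM'prof⟩ := IH (F \ S) d b c' x
          (hcardless _ (Finset.Subset.refl _))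
          (fun e he => hdiag e (Finset.sdiff_subset he))
          (fun e he => hd e (Finset.sdiff_subset he))
          hb
          (fun e he => hnoclip e (Finset.sdiff_subset he))
          (fun e he => by
            by_cases h : e = ep
            · rw [h, hc'ep]; exact hct
            · rw [hc'off e h]; exact hc e (Finset.sdiff_subset he))
          (fun e he => hx0 e (Finset.sdiff_subset he))
          (fun e he => hx1 e (Finset.sdiff_subset he))
          (hxcapsub _ Finset.sdiff_subset)
          (acyclic_mono Finset.sdiff_subset hacyc)
        -- choose the knapsack set depending on whether ep was used
        by_cases hepM : ep ∈ M'
        · -- use the reduced knapsack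
          have hfil : M'.filter (fun e => v ∈ e) = {ep} := by
            ext e
            simp only [Finset.mem_filter, Finset.mem_singleton]
            constructor
            · rintro ⟨heM, hev⟩
              have heFS := hM'sub heM
              rw [Finset.mem_sdiff] at heFS
              have := hδS e heFS.1 hev heFS.2
              rw [hPsing, Finset.mem_singleton] at this
              exact this
            · rintro rfl
              exact ⟨hepM, hvep⟩
          have hv : (∑ e ∈ M'.filter (fun e => v ∈ e), d e v) + (∑ f ∈ Ar, d f v) ≤ b v := by
            rw [hfil, Finset.sum_singleton]
            omega
          refine ⟨M' ∪ Ar, ?_, hglue _ _ hM'sub hArS hM'feas hv, ?_⟩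
          · exact Finset.union_subset (Finset.Subset.trans hM'sub Finset.sdiff_subset)
              (Finset.Subset.trans hArS hSsubF)
          · rw [hgluesum M' Ar hM'sub hArS, ← hsplit]
            -- profit of M' under c equals profit under c' plus (c ep - c' ep)
            have hMsplit : (∑ e ∈ M', c e) = c ep + ∑ e ∈ M'.erase ep, c e :=
              (Finset.add_sum_erase _ _ hepM).symm
            have hMsplit' : (∑ e ∈ M', c' e) = c' ep + ∑ e ∈ M'.erase ep, c e := by
              rw [← Finset.add_sum_erase _ _ hepM]
              congr 1
              exact Finset.sum_congr rfl (fun e he => hc'off e (Finset.ne_of_mem_erase he))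
            -- LP value under c' in terms of c
            have hFsplit : (∑ e ∈ F \ S, c e * x e)
                = c ep * x ep + ∑ e ∈ (F \ S).erase ep, c e * x e :=
              (Finset.add_sum_erase _ _ hepFS).symm
            have hFsplit' : (∑ e ∈ F \ S, c' e * x e)
                = c' ep * x ep + ∑ e ∈ (F \ S).erase ep, c e * x e := by
              rw [← Finset.add_sum_erase _ _ hepFS]
              congr 1
              exact Finset.sum_congr rfl
                (fun e he => by rw [hc'off e (Finset.ne_of_mem_erase he)])
            have hring : (2 - x ep) * (∑ f ∈ Af, c f) + (x ep) * (∑ f ∈ Ar, c f)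
                + ((∑ f ∈ Af, c f) - (∑ f ∈ Ar, c f)) * x ep = 2 * ∑ f ∈ Af, c f := by
              ring
            have hcep' : c' ep * x ep
                = c ep * x ep - ((∑ f ∈ Af, c f) - (∑ f ∈ Ar, c f)) * x ep := by
              rw [hc'ep]; ring
            linarith
        · -- ep unused : use the full knapsack
          have hfil : M'.filter (fun e => v ∈ e) = ∅ := by
            rw [Finset.eq_empty_iff_forall_notMem]
            intro e he
            rw [Finset.mem_filter] at he
            have heFS := hM'sub he.1
            rw [Finset.mem_sdiff] at heFS
            have := hδS e heFS.1 he.2 heFS.2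
            rw [hPsing, Finset.mem_singleton] at this
            subst this
            exact hepM he.1
          have hv : (∑ e ∈ M'.filter (fun e => v ∈ e), d e v) + (∑ f ∈ Af, d f v) ≤ b v := by
            rw [hfil]
            simpa using hAfcap
          refine ⟨M' ∪ Af, ?_, hglue _ _ hM'sub hAfS hM'feas hv, ?_⟩
          · exact Finset.union_subset (Finset.Subset.trans hM'sub Finset.sdiff_subset)
              (Finset.Subset.trans hAfS hSsubF)
          · rw [hgluesum M' Af hM'sub hAfS, ← hsplit]
            have hMeq : (∑ e ∈ M', c' e) = ∑ e ∈ M', c e :=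
              Finset.sum_congr rfl (fun e he => hc'off e (by rintro rfl; exact hepM he))
            have hFsplit : (∑ e ∈ F \ S, c e * x e)
                = c ep * x ep + ∑ e ∈ (F \ S).erase ep, c e * x e :=
              (Finset.add_sum_erase _ _ hepFS).symm
            have hFsplit' : (∑ e ∈ F \ S, c' e * x e)
                = c' ep * x ep + ∑ e ∈ (F \ S).erase ep, c e * x e := by
              rw [← Finset.add_sum_erase _ _ hepFS]
              congr 1
              exact Finset.sum_congr rfl
                (fun e he => by rw [hc'off e (Finset.ne_of_mem_erase he)])
            have hring : (2 - x ep) * (∑ f ∈ Af, c f) + (x ep) * (∑ f ∈ Ar, c f)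
                + ((∑ f ∈ Af, c f) - (∑ f ∈ Ar, c f)) * x ep = 2 * ∑ f ∈ Af, c f := by
              ring
            have hcep' : c' ep * x ep
                = c ep * x ep - ((∑ f ∈ Af, c f) - (∑ f ∈ Ar, c f)) * x ep := by
              rw [hc'ep]; ring
            linarith
      · -- drop ep entirely
        push_neg at hct
        obtain ⟨M', hM'sub, hM'feas, hM'prof⟩ := IH ((F \ S).erase ep) d b c x
          (hcardless _ (Finset.erase_subset _ _))
          (fun e he => hdiag e (Finset.sdiff_subset (Finset.erase_subset _ _ he)))
          (fun e he => hd e (Finset.sdiff_subset (Finset.erase_subset _ _ he)))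
          hb
          (fun e he => hnoclip e (Finset.sdiff_subset (Finset.erase_subset _ _ he)))
          (fun e he => hc e (Finset.sdiff_subset (Finset.erase_subset _ _ he)))
          (fun e he => hx0 e (Finset.sdiff_subset (Finset.erase_subset _ _ he)))
          (fun e he => hx1 e (Finset.sdiff_subset (Finset.erase_subset _ _ he)))
          (hxcapsub _ (Finset.Subset.trans (Finset.erase_subset _ _) Finset.sdiff_subset))
          (acyclic_mono (Finset.Subset.trans (Finset.erase_subset _ _) Finset.sdiff_subset)
            hacyc)
        have hM'FS : M' ⊆ F \ S :=
          Finset.Subset.trans hM'sub (Finset.erase_subset _ _)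
        have hfil : M'.filter (fun e => v ∈ e) = ∅ := by
          rw [Finset.eq_empty_iff_forall_notMem]
          intro e he
          rw [Finset.mem_filter] at he
          have heFS := hM'FS he.1
          rw [Finset.mem_sdiff] at heFS
          have := hδS e heFS.1 he.2 heFS.2
          rw [hPsing, Finset.mem_singleton] at this
          subst this
          exact (Finset.ne_of_mem_erase (hM'sub he.1)) rfl
        have hv : (∑ e ∈ M'.filter (fun e => v ∈ e), d e v) + (∑ f ∈ Af, d f v) ≤ b v := by
          rw [hfil]
          simpa using hAfcap
        refine ⟨M' ∪ Af, ?_, hglue _ _ hM'FS hAfS hM'feas hv, ?_⟩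
        · exact Finset.union_subset (Finset.Subset.trans hM'FS Finset.sdiff_subset)
            (Finset.Subset.trans hAfS hSsubF)
        · rw [hgluesum M' Af hM'FS hAfS, ← hsplit]
          have hFsplit : (∑ e ∈ F \ S, c e * x e)
              = c ep * x ep + ∑ e ∈ (F \ S).erase ep, c e * x e :=
            (Finset.add_sum_erase _ _ hepFS).symm
          have hcep : c ep * x ep
              ≤ ((∑ f ∈ Af, c f) - (∑ f ∈ Ar, c f)) * x ep :=
            mul_le_mul_of_nonneg_right (by linarith) (hx0 ep hepF)
          have hring : (2 - x ep) * (∑ f ∈ Af, c f) + (x ep) * (∑ f ∈ Ar, c f)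
              + ((∑ f ∈ Af, c f) - (∑ f ∈ Ar, c f)) * x ep = 2 * ∑ f ∈ Af, c f := by
            ring
          linarith

end Main

/-- **2-approximation on forests (Shepherd–Vetta).** If the support of a fractional
solution of a 2-CS-PIP instance is acyclic, then there is an integral solution of
profit at least half the LP value. -/
theorem twoCSPIP_forest_two_approximation
    {V : Type*} [Fintype V] [DecidableEq V]
    (G : SimpleGraph V) [DecidableRel G.Adj]
    (d : Sym2 V → V → ℤ) (b : V → ℤ) (c : Sym2 V → ℝ)
    (hd : ∀ e ∈ G.edgeFinset, ∀ u ∈ e, 1 ≤ d e u)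
    (hb : ∀ u : V, 1 ≤ b u)
    (hnoclip : ∀ e ∈ G.edgeFinset, ∀ u ∈ e, d e u ≤ b u)
    (hc : ∀ e ∈ G.edgeFinset, 0 ≤ c e)
    (x : {e : Sym2 V // e ∈ G.edgeFinset} → ℝ)
    (hx0 : ∀ e, 0 ≤ x e) (hx1 : ∀ e, x e ≤ 1)
    (hxcap : ∀ u : V,
      ∑ e : {e : Sym2 V // e ∈ G.edgeFinset},
        (if u ∈ e.1 then (d e.1 u : ℝ) * x e else 0) ≤ (b u : ℝ))
    (hforest : (SimpleGraph.fromEdgeSet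
      {e : Sym2 V | ∃ h : e ∈ G.edgeFinset, 0 < x ⟨e, h⟩}).IsAcyclic) :
    ∃ M : Finset (Sym2 V), M ⊆ G.edgeFinset ∧
      (∀ u : V, ∑ e ∈ M.filter (fun e => u ∈ e), d e u ≤ b u) ∧
      (1 / 2) * ∑ e : {e : Sym2 V // e ∈ G.edgeFinset}, c e.1 * x e ≤ ∑ e ∈ M, c e := by
  classical
  set xbar : Sym2 V → ℝ := fun e => if h : e ∈ G.edgeFinset then x ⟨e, h⟩ else 0 with hxbar
  have hxbar_eq : ∀ (e : Sym2 V) (h : e ∈ G.edgeFinset), xbar e = x ⟨e, h⟩ := by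
    intro e h
    rw [hxbar]
    simp [h]
  have hxbar0 : ∀ e, 0 ≤ xbar e := by
    intro e
    rw [hxbar]
    by_cases h : e ∈ G.edgeFinset
    · simp only [h, dif_pos]; exact hx0 _
    · simp [h]
  set F : Finset (Sym2 V) := G.edgeFinset.filter (fun e => 0 < xbar e) with hF
  have hFsub : F ⊆ G.edgeFinset := Finset.filter_subset _ _
  have hsupport : (F : Set (Sym2 V))
      = {e : Sym2 V | ∃ h : e ∈ G.edgeFinset, 0 < x ⟨e, h⟩} := by
    ext e
    simp only [Finset.coe_filter, Set.mem_setOf_eq, hF, Finset.mem_coe, Finset.mem_filter]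
    constructor
    · rintro ⟨h1, h2⟩
      exact ⟨h1, by rwa [hxbar_eq e h1] at h2⟩
    · rintro ⟨h1, h2⟩
      exact ⟨h1, by rwa [hxbar_eq e h1]⟩
  -- transfer of the subtype sums
  have hsum_gen : ∀ (φ : Sym2 V → ℝ → ℝ),
      (∑ e : {e : Sym2 V // e ∈ G.edgeFinset}, φ e.1 (x e))
        = ∑ e ∈ G.edgeFinset, φ e (xbar e) := by
    intro φ
    rw [← Finset.sum_attach G.edgeFinset (fun e => φ e (xbar e)), ← Finset.univ_eq_attach]
    apply Finset.sum_congr rfl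
    intro e _
    rw [hxbar_eq e.1 e.2]
  have hsum_F : (∑ e ∈ G.edgeFinset, c e * xbar e) = ∑ e ∈ F, c e * xbar e := by
    symm
    apply Finset.sum_subset hFsub
    intro e he hne
    have h0 : xbar e = 0 := by
      by_contra h
      exact hne (Finset.mem_filter.mpr ⟨he, lt_of_le_of_ne (hxbar0 e) (Ne.symm h)⟩)
    rw [h0, mul_zero]
  have hxcapF : ∀ u, ∑ e ∈ F.filter (fun e => u ∈ e), (d e u : ℝ) * xbar e ≤ (b u : ℝ) := by
    intro u
    have h1 : (∑ e : {e : Sym2 V // e ∈ G.edgeFinset},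
        (if u ∈ e.1 then (d e.1 u : ℝ) * x e else 0))
        = ∑ e ∈ G.edgeFinset, (if u ∈ e then (d e u : ℝ) * xbar e else 0) :=
      hsum_gen (fun e y => if u ∈ e then (d e u : ℝ) * y else 0)
    have h2 : (∑ e ∈ G.edgeFinset, (if u ∈ e then (d e u : ℝ) * xbar e else 0))
        = ∑ e ∈ G.edgeFinset.filter (fun e => u ∈ e), (d e u : ℝ) * xbar e :=
      (Finset.sum_filter _ _).symm
    have h3 : (∑ e ∈ F.filter (fun e => u ∈ e), (d e u : ℝ) * xbar e)
        ≤ ∑ e ∈ G.edgeFinset.filter (fun e => u ∈ e), (d e u : ℝ) * xbar e := by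
      apply Finset.sum_le_sum_of_subset_of_nonneg
        (Finset.filter_subset_filter _ hFsub)
      intro e he _
      rw [Finset.mem_filter] at he
      have hde : (0:ℝ) ≤ (d e u : ℝ) := by
        exact_mod_cast le_trans zero_le_one (hd e he.1 u he.2)
      exact mul_nonneg hde (hxbar0 e)
    calc (∑ e ∈ F.filter (fun e => u ∈ e), (d e u : ℝ) * xbar e)
        ≤ ∑ e ∈ G.edgeFinset.filter (fun e => u ∈ e), (d e u : ℝ) * xbar e := h3
      _ = ∑ e : {e : Sym2 V // e ∈ G.edgeFinset},
            (if u ∈ e.1 then (d e.1 u : ℝ) * x e else 0) := by rw [h1, h2]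
      _ ≤ (b u : ℝ) := hxcap u
  obtain ⟨M, hMsub, hMfeas, hMprof⟩ := main_induction F.card F d b c xbar le_rfl
    (fun e he => by
      have := hFsub he
      rw [SimpleGraph.mem_edgeFinset] at this
      exact G.not_isDiag_of_mem_edgeSet this)
    (fun e he => hd e (hFsub he))
    hb
    (fun e he => hnoclip e (hFsub he))
    (fun e he => hc e (hFsub he))
    (fun e _ => hxbar0 e)
    (fun e he => by
      rw [hxbar_eq e (hFsub he)]
      exact hx1 _)
    hxcapF
    (by rw [hsupport]; exact hforest)
  refine ⟨M, Finset.Subset.trans hMsub hFsub, hMfeas, ?_⟩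
  calc (1 / 2) * ∑ e : {e : Sym2 V // e ∈ G.edgeFinset}, c e.1 * x e
      = (1/2 : ℝ) * ∑ e ∈ F, c e * xbar e := by
        rw [hsum_gen (fun e y => c e * y), hsum_F]
    _ ≤ ∑ e ∈ M, c e := hMprof
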